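/- Let H(q,t) = \sum_{d\geq 0} q^{-(m-1)d(d-1)/2} t^d / \prod_{k=1}^d(1-q^k). Then the quotient F(t) = H(q,t)/H(q,qt) satisfies F(t) = 1 + t \cdot \prod_{k=1}^m F(q^{1-k}t). -/

import Mathlib

open PowerSeries

/-- The series `H(q,t) = ∑_{d≥0} q^{-(m-1)d(d-1)/2} t^d / ∏_{k=1}^d(1-q^k)`. -/
noncomputable def Hser (m : ℕ) : PowerSeries (RatFunc ℚ) :=
  PowerSeries.mk fun d =>
    (RatFunc.X : RatFunc ℚ) ^ (-(((m : ℤ) - 1) * d * ((d : ℤ) - 1) / 2)) /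
      ∏ k ∈ Finset.Icc 1 d, (1 - (RatFunc.X : RatFunc ℚ) ^ k)


lemma one_sub_X_pow_ne_zero {k : ℕ} (hk : 1 ≤ k) :
    (1 - (RatFunc.X : RatFunc ℚ) ^ k) ≠ 0 := by
  have h : (1 - (Polynomial.X : Polynomial ℚ) ^ k) ≠ 0 := by
    intro h
    have := congrArg (fun p => Polynomial.coeff p 0) h
    simp only [Polynomial.coeff_sub, Polynomial.coeff_one, Polynomial.coeff_X_pow, Polynomial.coeff_zero] at this
    rw [if_neg (by omega : ¬ 0 = k)] at this; simp at this
  have := (map_ne_zero_iff _ (RatFunc.algebraMap_injective ℚ)).mpr h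
  simpa [RatFunc.algebraMap_X] using this

lemma prod_ne_zero (n : ℕ) :
    (∏ k ∈ Finset.Icc 1 n, (1 - (RatFunc.X : RatFunc ℚ) ^ k)) ≠ 0 :=
  Finset.prod_ne_zero_iff.mpr fun k hk => one_sub_X_pow_ne_zero (Finset.mem_Icc.mp hk).1

lemma constantCoeff_Hser (m : ℕ) : constantCoeff (Hser m) = 1 := by
  simp [Hser, ← coeff_zero_eq_constantCoeff, coeff_mk]

lemma rescale_inv (c : RatFunc ℚ) (f : PowerSeries (RatFunc ℚ))
    (hf : constantCoeff f ≠ 0) :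
    rescale c (f⁻¹) = (rescale c f)⁻¹ := by
  have hc : constantCoeff (rescale c f) ≠ 0 := by
    simpa [← coeff_zero_eq_constantCoeff, coeff_rescale] using hf
  rw [PowerSeries.eq_inv_iff_mul_eq_one hc, ← map_mul,
    PowerSeries.inv_mul_cancel f hf, map_one]

lemma Hser_key (m : ℕ) :
    Hser m = rescale (RatFunc.X : RatFunc ℚ) (Hser m)
      + X * rescale ((RatFunc.X : RatFunc ℚ) ^ ((1 : ℤ) - m)) (Hser m) := by
  have hX : (RatFunc.X : RatFunc ℚ) ≠ 0 := RatFunc.X_ne_zero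
  ext n
  rcases n with _ | d
  · simp only [map_add, coeff_zero_eq_constantCoeff, map_mul, constantCoeff_X, zero_mul,
      add_zero, ← coeff_zero_eq_constantCoeff, coeff_rescale, coeff_mk, pow_zero, one_mul]
    norm_num [Hser, coeff_mk]
  · simp only [map_add, coeff_rescale, coeff_succ_X_mul, Hser, coeff_mk]
    push_cast
    obtain ⟨c, hc⟩ := Int.even_mul_succ_self ((d : ℤ) - 1)
    have hc2 : ((d : ℤ) - 1) * d = 2 * c := by linear_combination hc
    have e1 : ((m : ℤ) - 1) * ((d : ℤ) + 1) * ((d : ℤ) + 1 - 1) / 2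
        = ((m : ℤ) - 1) * (c + d) := by
      rw [show ((m : ℤ) - 1) * ((d : ℤ) + 1) * ((d : ℤ) + 1 - 1)
          = 2 * (((m : ℤ) - 1) * (c + d)) from by linear_combination ((m : ℤ) - 1) * hc2]
      exact Int.mul_ediv_cancel_left _ two_ne_zero
    have e2 : ((m : ℤ) - 1) * (d : ℤ) * ((d : ℤ) - 1) / 2 = ((m : ℤ) - 1) * c := by
      rw [show ((m : ℤ) - 1) * (d : ℤ) * ((d : ℤ) - 1)
          = 2 * (((m : ℤ) - 1) * c) from by linear_combination ((m : ℤ) - 1) * hc2]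
      exact Int.mul_ediv_cancel_left _ two_ne_zero
    have hE : -(((m : ℤ) - 1) * ((d : ℤ) + 1) * ((d : ℤ) + 1 - 1) / 2)
        = ((1 : ℤ) - m) * d + -(((m : ℤ) - 1) * (d : ℤ) * ((d : ℤ) - 1) / 2) := by
      rw [e1, e2]; ring
    rw [hE, zpow_add₀ hX,
      ← zpow_natCast ((RatFunc.X : RatFunc ℚ) ^ ((1 : ℤ) - m)) d, ← zpow_mul,
      Finset.prod_Icc_succ_top (by omega : 1 ≤ d + 1)]
    have hP := prod_ne_zero d
    have hQ := one_sub_X_pow_ne_zero (k := d + 1) (by omega)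
    have hz : ∀ j : ℤ, (RatFunc.X : RatFunc ℚ) ^ j ≠ 0 := fun j => zpow_ne_zero j hX
    field_simp [hz]
    ring

lemma telescope (B : ℕ → PowerSeries (RatFunc ℚ))
    (hB : ∀ k, constantCoeff (B k) ≠ 0) (n : ℕ) :
    ∏ k ∈ Finset.range n, (B (k + 1) * (B k)⁻¹) = B n * (B 0)⁻¹ := by
  induction n with
  | zero => simp [PowerSeries.mul_inv_cancel _ (hB 0)]
  | succ n ih =>
    rw [Finset.prod_range_succ, ih]
    have h1 : (B n)⁻¹ * B n = 1 := PowerSeries.inv_mul_cancel _ (hB n)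
    calc B n * (B 0)⁻¹ * (B (n + 1) * (B n)⁻¹)
        = B (n + 1) * ((B n)⁻¹ * B n) * (B 0)⁻¹ := by ring
      _ = B (n + 1) * (B 0)⁻¹ := by rw [h1]; ring


/-- The quotient `F(t) = H(q,t)/H(q,qt)` satisfies `F(t) = 1 + t·∏_{k=1}^m F(q^{1-k}t)`. -/
theorem Hser_quotient_functional_equation (m : ℕ) (hm : 1 ≤ m) :
    Hser m * (rescale (RatFunc.X : RatFunc ℚ) (Hser m))⁻¹ =
      1 + X * ∏ k ∈ Finset.range m,
        rescale ((RatFunc.X : RatFunc ℚ) ^ (-(k : ℤ)))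
          (Hser m * (rescale (RatFunc.X : RatFunc ℚ) (Hser m))⁻¹) := by
  have hX : (RatFunc.X : RatFunc ℚ) ≠ 0 := RatFunc.X_ne_zero
  have hcc : ∀ (c : RatFunc ℚ) (f : PowerSeries (RatFunc ℚ)),
      constantCoeff (rescale c f) = constantCoeff f := fun c f => by
    rw [← coeff_zero_eq_constantCoeff, coeff_rescale, pow_zero, one_mul,
      coeff_zero_eq_constantCoeff]
  set B : ℕ → PowerSeries (RatFunc ℚ) :=
    fun j => rescale ((RatFunc.X : RatFunc ℚ) ^ ((1 : ℤ) - j)) (Hser m) with hBdef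
  have hB : ∀ j, constantCoeff (B j) ≠ 0 := fun j => by
    simp only [hBdef, hcc, constantCoeff_Hser]; exact one_ne_zero
  have hB0 : B 0 = rescale (RatFunc.X : RatFunc ℚ) (Hser m) := by
    simp [hBdef]
  have hterm : ∀ k : ℕ,
      rescale ((RatFunc.X : RatFunc ℚ) ^ (-(k : ℤ)))
        (Hser m * (rescale (RatFunc.X : RatFunc ℚ) (Hser m))⁻¹) = B (k + 1) * (B k)⁻¹ := by
    intro k
    have hcr : constantCoeff (rescale (RatFunc.X : RatFunc ℚ) (Hser m)) ≠ 0 := by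
      rw [hcc, constantCoeff_Hser]; exact one_ne_zero
    rw [map_mul, rescale_inv _ _ hcr, rescale_rescale]
    have e1 : rescale ((RatFunc.X : RatFunc ℚ) ^ (-(k : ℤ))) (Hser m) = B (k + 1) := by
      simp only [hBdef]
      congr 1
      push_cast
      ring_nf
    have e2 : (RatFunc.X : RatFunc ℚ) * (RatFunc.X : RatFunc ℚ) ^ (-(k : ℤ))
        = (RatFunc.X : RatFunc ℚ) ^ ((1 : ℤ) - (k : ℤ)) := by
      rw [show ((1 : ℤ) - (k : ℤ)) = 1 + -(k : ℤ) from by ring, zpow_add₀ hX, zpow_one]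
    rw [e1, e2]
  rw [Finset.prod_congr rfl (fun k _ => hterm k), telescope B hB m, ← hB0]
  have hB0ne : B 0 ≠ 0 := fun h => hB 0 (by rw [h]; simp)
  apply mul_right_cancel₀ hB0ne
  have hinv : (B 0)⁻¹ * B 0 = 1 := PowerSeries.inv_mul_cancel _ (hB 0)
  calc Hser m * (B 0)⁻¹ * B 0 = Hser m * ((B 0)⁻¹ * B 0) := by ring
    _ = Hser m := by rw [hinv, mul_one]
    _ = B 0 + X * B m := by
        rw [hB0, hBdef]
        exact Hser_key m
    _ = (1 + X * (B m * (B 0)⁻¹)) * B 0 := by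
        rw [add_mul, one_mul, mul_assoc, mul_assoc, hinv, mul_one]
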